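/- (Harmonic polynomials of degree n separate antipodal pairs on the sphere.) Let n ≥ 1 and let x, x' ∈ ℝ³ satisfy x₁² + x₂² + x₃² = 1 and x'₁² + x'₂² + x'₃² = 1. If p(x) = p(x') for every polynomial p ∈ ℝ[x₁,x₂,x₃] that is homogeneous of degree n with Δp = 0 (evaluation via MvPolynomial.eval), then x' = x or x' = (−1)^(n−1)·x. -/

import Mathlib

open MvPolynomial

/-- The Laplace operator on `ℝ[x₁,x₂,x₃]`. -/
noncomputable def lap (p : MvPolynomial (Fin 3) ℝ) : MvPolynomial (Fin 3) ℝ :=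
  pderiv 0 (pderiv 0 p) + pderiv 1 (pderiv 1 p) + pderiv 2 (pderiv 2 p)

/-- The Laplace operator on `ℂ[x₁,x₂,x₃]`. -/
noncomputable def lapC (p : MvPolynomial (Fin 3) ℂ) : MvPolynomial (Fin 3) ℂ :=
  pderiv 0 (pderiv 0 p) + pderiv 1 (pderiv 1 p) + pderiv 2 (pderiv 2 p)

lemma map_lap (q : MvPolynomial (Fin 3) ℝ) :
    map (algebraMap ℝ ℂ) (lap q) = lapC (map (algebraMap ℝ ℂ) q) := by
  simp [lap, lapC, pderiv_map]

noncomputable def rePart (P : MvPolynomial (Fin 3) ℂ) : MvPolynomial (Fin 3) ℝ :=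
  ∑ m ∈ P.support, monomial m (P.coeff m).re

noncomputable def imPart (P : MvPolynomial (Fin 3) ℂ) : MvPolynomial (Fin 3) ℝ :=
  ∑ m ∈ P.support, monomial m (P.coeff m).im

lemma coeff_rePart (P : MvPolynomial (Fin 3) ℂ) (m : Fin 3 →₀ ℕ) :
    coeff m (rePart P) = (P.coeff m).re := by
  classical
  rw [rePart, coeff_sum]
  simp only [coeff_monomial]
  rw [Finset.sum_ite_eq' P.support m (fun m => (P.coeff m).re)]
  split_ifs with h
  · rfl
  · simp [notMem_support_iff.mp h]

lemma coeff_imPart (P : MvPolynomial (Fin 3) ℂ) (m : Fin 3 →₀ ℕ) :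
    coeff m (imPart P) = (P.coeff m).im := by
  classical
  rw [imPart, coeff_sum]
  simp only [coeff_monomial]
  rw [Finset.sum_ite_eq' P.support m (fun m => (P.coeff m).im)]
  split_ifs with h
  · rfl
  · simp [notMem_support_iff.mp h]

lemma rePart_add_imPart (P : MvPolynomial (Fin 3) ℂ) :
    map (algebraMap ℝ ℂ) (rePart P) + Complex.I • map (algebraMap ℝ ℂ) (imPart P) = P := by
  ext m
  simp only [coeff_add, coeff_map, coeff_smul, coeff_rePart, coeff_imPart, smul_eq_mul]
  simp [Complex.ext_iff]

lemma parts_eq_zero {A B : MvPolynomial (Fin 3) ℝ}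
    (h : map (algebraMap ℝ ℂ) A + Complex.I • map (algebraMap ℝ ℂ) B = 0) :
    A = 0 ∧ B = 0 := by
  have hm : ∀ m : Fin 3 →₀ ℕ, ((coeff m A : ℝ) : ℂ) + Complex.I * ((coeff m B : ℝ) : ℂ) = 0 := by
    intro m
    have := congrArg (coeff m) h
    simpa [coeff_map, coeff_smul] using this
  constructor <;> ext m <;>
    · have := hm m
      rw [Complex.ext_iff] at this
      simp at this
      simp [this]

lemma eval_map_ofReal (x : Fin 3 → ℝ) (q : MvPolynomial (Fin 3) ℝ) :
    eval (fun i => (x i : ℂ)) (map (algebraMap ℝ ℂ) q) = ((eval x q : ℝ) : ℂ) := by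
  rw [eval_map]
  have := map_eval₂Hom (RingHom.id ℝ) x Complex.ofRealHom q
  simp only [coe_eval₂Hom] at this ⊢
  rw [show ((eval x q : ℝ) : ℂ) = Complex.ofRealHom (eval x q) from rfl, eval]
  simp only [coe_eval₂Hom] at this ⊢
  rw [this]
  rfl

lemma second_deriv (L : MvPolynomial (Fin 3) ℂ) (i : Fin 3) (c : ℂ)
    (hc : pderiv i L = C c) (n : ℕ) :
    pderiv i (pderiv i (L ^ n)) = n • ((n - 1) • (L ^ (n - 1 - 1) * (C c * C c))) := by
  rw [pderiv_pow, hc, mul_assoc, ← nsmul_eq_mul, map_nsmul, pderiv_mul, pderiv_C,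
    mul_zero, add_zero, pderiv_pow, hc, mul_assoc, ← nsmul_eq_mul, smul_mul_assoc]

lemma lapC_null_pow (a0 a1 a2 : ℂ) (ha : a0^2 + a1^2 + a2^2 = 0) (n : ℕ) :
    lapC ((C a0 * X 0 + C a1 * X 1 + C a2 * X 2) ^ n) = 0 := by
  set L : MvPolynomial (Fin 3) ℂ := C a0 * X 0 + C a1 * X 1 + C a2 * X 2 with hL
  have hd0 : pderiv 0 L = C a0 := by simp [hL, pderiv_C_mul, pderiv_X]
  have hd1 : pderiv 1 L = C a1 := by simp [hL, pderiv_C_mul, pderiv_X]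
  have hd2 : pderiv 2 L = C a2 := by simp [hL, pderiv_C_mul, pderiv_X]
  rw [lapC, second_deriv L 0 a0 hd0 n, second_deriv L 1 a1 hd1 n, second_deriv L 2 a2 hd2 n,
    ← smul_add, ← smul_add, ← smul_add, ← smul_add, ← mul_add, ← mul_add,
    ← map_mul, ← map_mul, ← map_mul, ← map_add, ← map_add]
  rw [show a0*a0 + a1*a1 + a2*a2 = a0^2+a1^2+a2^2 by ring, ha]
  simp

lemma homog_null_pow (a0 a1 a2 : ℂ) (n : ℕ) :
    ((C a0 * X 0 + C a1 * X 1 + C a2 * X 2 : MvPolynomial (Fin 3) ℂ) ^ n).IsHomogeneous n := by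
  have h1 : (C a0 * X 0 + C a1 * X 1 + C a2 * X 2 : MvPolynomial (Fin 3) ℂ).IsHomogeneous 1 :=
    ((isHomogeneous_C_mul_X a0 0).add (isHomogeneous_C_mul_X a1 1)).add
      (isHomogeneous_C_mul_X a2 2)
  simpa using h1.pow n

set_option maxHeartbeats 1000000 in
lemma key_eval (n : ℕ) (x x' : Fin 3 → ℝ)
    (heval : ∀ p : MvPolynomial (Fin 3) ℝ, p.IsHomogeneous n → lap p = 0 →
      eval x p = eval x' p)
    (a0 a1 a2 : ℂ) (ha : a0^2 + a1^2 + a2^2 = 0) :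
    (a0 * x 0 + a1 * x 1 + a2 * x 2) ^ n = (a0 * x' 0 + a1 * x' 1 + a2 * x' 2) ^ n := by
  set P : MvPolynomial (Fin 3) ℂ := (C a0 * X 0 + C a1 * X 1 + C a2 * X 2) ^ n with hP
  have hhom : P.IsHomogeneous n := homog_null_pow a0 a1 a2 n
  have hlap : lapC P = 0 := lapC_null_pow a0 a1 a2 ha n
  have hreh : (rePart P).IsHomogeneous n := fun d hd =>
    hhom (fun hc => hd (by rw [coeff_rePart, hc, Complex.zero_re]))
  have himh : (imPart P).IsHomogeneous n := fun d hd =>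
    hhom (fun hc => hd (by rw [coeff_imPart, hc, Complex.zero_im]))
  have hdecomp := rePart_add_imPart P
  have hlap0 : lap (rePart P) = 0 ∧ lap (imPart P) = 0 := by
    apply parts_eq_zero
    rw [map_lap, map_lap]
    have h2 : lapC (map (algebraMap ℝ ℂ) (rePart P)) +
        Complex.I • lapC (map (algebraMap ℝ ℂ) (imPart P)) = lapC P := by
      conv_rhs => rw [← hdecomp]
      simp only [lapC, map_add, Derivation.map_smul, smul_add]
      abel
    rw [h2, hlap]
  have he : ∀ y : Fin 3 → ℝ, eval (fun i => (y i : ℂ)) P =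
      ((eval y (rePart P) : ℝ) : ℂ) + Complex.I * ((eval y (imPart P) : ℝ) : ℂ) := by
    intro y
    conv_lhs => rw [← hdecomp]
    rw [smul_eq_C_mul]
    simp only [map_add, map_mul, eval_C, eval_map_ofReal]
  have hre := heval (rePart P) hreh hlap0.1
  have him := heval (imPart P) himh hlap0.2
  have hx := he x
  have hx' := he x'
  rw [hre, him, ← hx'] at hx
  have hev : ∀ y : Fin 3 → ℝ, eval (fun i => (y i : ℂ)) P =
      (a0 * y 0 + a1 * y 1 + a2 * y 2) ^ n := by
    intro y
    rw [hP]
    simp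
  rw [hev x, hev x'] at hx
  exact hx

lemma normSq_combo (r0 r1 r2 s0 s1 s2 : ℝ) (y : Fin 3 → ℝ) :
    Complex.normSq (((r0 : ℂ) + s0 * Complex.I) * y 0 + ((r1 : ℂ) + s1 * Complex.I) * y 1 +
        ((r2 : ℂ) + s2 * Complex.I) * y 2)
      = (r0 * y 0 + r1 * y 1 + r2 * y 2) ^ 2 + (s0 * y 0 + s1 * y 1 + s2 * y 2) ^ 2 := by
  simp [Complex.normSq_apply, Complex.add_re, Complex.add_im, Complex.mul_re, Complex.mul_im]
  ring

lemma null_combo (r0 r1 r2 s0 s1 s2 : ℝ) (hrs : r0 * s0 + r1 * s1 + r2 * s2 = 0)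
    (hnorm : r0 ^ 2 + r1 ^ 2 + r2 ^ 2 = s0 ^ 2 + s1 ^ 2 + s2 ^ 2) :
    ((r0 : ℂ) + s0 * Complex.I) ^ 2 + ((r1 : ℂ) + s1 * Complex.I) ^ 2 +
      ((r2 : ℂ) + s2 * Complex.I) ^ 2 = 0 := by
  have h1 : (r0 : ℂ) ^ 2 + (r1 : ℂ) ^ 2 + (r2 : ℂ) ^ 2
      = (s0 : ℂ) ^ 2 + (s1 : ℂ) ^ 2 + (s2 : ℂ) ^ 2 := by exact_mod_cast congrArg (fun t : ℝ => (t : ℂ)) hnorm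
  have h2 : (r0 : ℂ) * s0 + (r1 : ℂ) * s1 + (r2 : ℂ) * s2 = 0 := by exact_mod_cast congrArg (fun t : ℝ => (t : ℂ)) hrs
  have hI : Complex.I ^ 2 = -1 := Complex.I_sq
  linear_combination h1 + 2 * Complex.I * h2 + ((s0:ℂ)^2 + (s1:ℂ)^2 + (s2:ℂ)^2) * hI

lemma prod_zero₁ {a b a' b' : ℝ} (ha : a' = a) (hb : b' = -b) (hp : a' * b' = a * b) :
    a * b = 0 := by
  rw [ha, hb] at hp; linear_combination (-1/2 : ℝ) * hp

lemma prod_zero₂ {a b a' b' : ℝ} (ha : a' = -a) (hb : b' = b) (hp : a' * b' = a * b) :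
    a * b = 0 := by
  rw [ha, hb] at hp; linear_combination (-1/2 : ℝ) * hp

lemma funext3 {f g : Fin 3 → ℝ} (h0 : f 0 = g 0) (h1 : f 1 = g 1) (h2 : f 2 = g 2) : f = g := by
  funext i; fin_cases i <;> assumption

/-- Harmonic homogeneous polynomials of degree `n` separate antipodal pairs on the
unit sphere. -/
theorem harmonic_separate_points (n : ℕ) (hn : 1 ≤ n) (x x' : Fin 3 → ℝ)
    (hx : x 0 ^ 2 + x 1 ^ 2 + x 2 ^ 2 = 1) (hx' : x' 0 ^ 2 + x' 1 ^ 2 + x' 2 ^ 2 = 1)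
    (heval : ∀ p : MvPolynomial (Fin 3) ℝ, p.IsHomogeneous n → lap p = 0 →
      eval x p = eval x' p) :
    x' = x ∨ x' = ((-1 : ℝ) ^ (n - 1)) • x := by
  have key := key_eval n x x' heval
  -- squared-modulus equalities from the six null vectors
  have habs : ∀ r0 r1 r2 s0 s1 s2 : ℝ, r0 * s0 + r1 * s1 + r2 * s2 = 0 →
      r0 ^ 2 + r1 ^ 2 + r2 ^ 2 = s0 ^ 2 + s1 ^ 2 + s2 ^ 2 →
      (r0 * x 0 + r1 * x 1 + r2 * x 2) ^ 2 + (s0 * x 0 + s1 * x 1 + s2 * x 2) ^ 2 =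
      (r0 * x' 0 + r1 * x' 1 + r2 * x' 2) ^ 2 + (s0 * x' 0 + s1 * x' 1 + s2 * x' 2) ^ 2 := by
    intro r0 r1 r2 s0 s1 s2 hrs hnorm
    have h := key _ _ _ (null_combo r0 r1 r2 s0 s1 s2 hrs hnorm)
    have h2 := congrArg (fun z : ℂ => ‖z‖) h
    rw [norm_pow, norm_pow] at h2
    have h3 := (pow_left_inj₀ (norm_nonneg _) (norm_nonneg _)
      (by omega : n ≠ 0)).mp h2
    have h4 := congrArg (fun t => t ^ 2) h3
    simp only [Complex.sq_norm] at h4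
    rw [normSq_combo, normSq_combo] at h4
    exact h4
  have sqrt2 : Real.sqrt 2 ^ 2 = 2 := Real.sq_sqrt (by norm_num)
  have E1 := habs 1 0 0 0 1 0 (by ring) (by ring)
  have E2 := habs 1 0 0 0 0 1 (by ring) (by ring)
  have E3 := habs 0 1 0 0 0 1 (by ring) (by ring)
  have E4 := habs 1 1 0 0 0 (Real.sqrt 2) (by ring) (by rw [sqrt2]; ring)
  have E5 := habs 1 0 1 0 (Real.sqrt 2) 0 (by ring) (by rw [sqrt2]; ring)
  have E6 := habs 0 1 1 (Real.sqrt 2) 0 0 (by ring) (by rw [sqrt2]; ring)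
  ring_nf at E1 E2 E3 E4 E5 E6
  rw [sqrt2] at E4 E5 E6
  -- coordinatewise squares agree
  have s0 : x' 0 ^ 2 = x 0 ^ 2 := by linarith [E1, E2, E3]
  have s1 : x' 1 ^ 2 = x 1 ^ 2 := by linarith [E1, E2, E3]
  have s2 : x' 2 ^ 2 = x 2 ^ 2 := by linarith [E1, E2, E3]
  -- pairwise products agree
  have p01 : x' 0 * x' 1 = x 0 * x 1 := by linarith [E4, s0, s1, s2]
  have p02 : x' 0 * x' 2 = x 0 * x 2 := by linarith [E5, s0, s1, s2]
  have p12 : x' 1 * x' 2 = x 1 * x 2 := by linarith [E6, s0, s1, s2]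
  have d0 : x' 0 = x 0 ∨ x' 0 = -x 0 := sq_eq_sq_iff_eq_or_eq_neg.mp s0
  have d1 : x' 1 = x 1 ∨ x' 1 = -x 1 := sq_eq_sq_iff_eq_or_eq_neg.mp s1
  have d2 : x' 2 = x 2 ∨ x' 2 = -x 2 := sq_eq_sq_iff_eq_or_eq_neg.mp s2
  -- dichotomy: x' = x or x' = -x
  have hdich : x' = x ∨ x' = fun i => -x i := by
    rcases d0 with h0 | h0 <;> rcases d1 with h1 | h1 <;> rcases d2 with h2 | h2
    · exact Or.inl (funext3 h0 h1 h2)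
    · -- (+,+,-)
      have e0 : x 0 * x 2 = 0 := prod_zero₁ h0 h2 p02
      have e1 : x 1 * x 2 = 0 := prod_zero₁ h1 h2 p12
      by_cases hz : x 2 = 0
      · refine Or.inl (funext3 h0 h1 ?_)
        rw [h2, hz, neg_zero]
      · refine Or.inr (funext3 ?_ ?_ h2)
        · show x' 0 = -x 0
          rw [h0, (mul_eq_zero.mp e0).resolve_right hz, neg_zero]
        · show x' 1 = -x 1
          rw [h1, (mul_eq_zero.mp e1).resolve_right hz, neg_zero]
    · -- (+,-,+)
      have e0 : x 0 * x 1 = 0 := prod_zero₁ h0 h1 p01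
      have e1 : x 1 * x 2 = 0 := prod_zero₂ h1 h2 p12
      by_cases hz : x 1 = 0
      · refine Or.inl (funext3 h0 ?_ h2)
        rw [h1, hz, neg_zero]
      · refine Or.inr (funext3 ?_ h1 ?_)
        · show x' 0 = -x 0
          rw [h0, (mul_eq_zero.mp e0).resolve_right hz, neg_zero]
        · show x' 2 = -x 2
          rw [h2, (mul_eq_zero.mp e1).resolve_left hz, neg_zero]
    · -- (+,-,-)
      have e0 : x 0 * x 1 = 0 := prod_zero₁ h0 h1 p01
      have e1 : x 0 * x 2 = 0 := prod_zero₁ h0 h2 p02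
      by_cases hz : x 0 = 0
      · refine Or.inr (funext3 ?_ h1 h2)
        show x' 0 = -x 0
        rw [h0, hz, neg_zero]
      · refine Or.inl (funext3 h0 ?_ ?_)
        · rw [h1, (mul_eq_zero.mp e0).resolve_left hz, neg_zero]
        · rw [h2, (mul_eq_zero.mp e1).resolve_left hz, neg_zero]
    · -- (-,+,+)
      have e0 : x 0 * x 1 = 0 := prod_zero₂ h0 h1 p01
      have e1 : x 0 * x 2 = 0 := prod_zero₂ h0 h2 p02
      by_cases hz : x 0 = 0
      · refine Or.inl (funext3 ?_ h1 h2)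
        rw [h0, hz, neg_zero]
      · refine Or.inr (funext3 h0 ?_ ?_)
        · show x' 1 = -x 1
          rw [h1, (mul_eq_zero.mp e0).resolve_left hz, neg_zero]
        · show x' 2 = -x 2
          rw [h2, (mul_eq_zero.mp e1).resolve_left hz, neg_zero]
    · -- (-,+,-)
      have e0 : x 0 * x 1 = 0 := prod_zero₂ h0 h1 p01
      have e1 : x 1 * x 2 = 0 := prod_zero₁ h1 h2 p12
      by_cases hz : x 1 = 0
      · refine Or.inr (funext3 h0 ?_ h2)
        show x' 1 = -x 1
        rw [h1, hz, neg_zero]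
      · refine Or.inl (funext3 ?_ h1 ?_)
        · rw [h0, (mul_eq_zero.mp e0).resolve_right hz, neg_zero]
        · rw [h2, (mul_eq_zero.mp e1).resolve_left hz, neg_zero]
    · -- (-,-,+)
      have e0 : x 0 * x 2 = 0 := prod_zero₂ h0 h2 p02
      have e1 : x 1 * x 2 = 0 := prod_zero₂ h1 h2 p12
      by_cases hz : x 2 = 0
      · refine Or.inr (funext3 h0 h1 ?_)
        show x' 2 = -x 2
        rw [h2, hz, neg_zero]
      · refine Or.inl (funext3 ?_ ?_ h2)
        · rw [h0, (mul_eq_zero.mp e0).resolve_right hz, neg_zero]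
        · rw [h1, (mul_eq_zero.mp e1).resolve_right hz, neg_zero]
    · exact Or.inr (funext3 h0 h1 h2)
  rcases hdich with hEq | hNeg
  · exact Or.inl hEq
  · -- x' = -x ; show n is even
    have hxne : x 0 ≠ 0 ∨ x 1 ≠ 0 ∨ x 2 ≠ 0 := by
      by_contra hcon
      push_neg at hcon
      rw [hcon.1, hcon.2.1, hcon.2.2] at hx
      norm_num at hx
    have hneg : ∀ i, x' i = -x i := fun i => by rw [hNeg]
    have heven : Even n := by
      have hzkey : ∀ a0 a1 a2 : ℂ, a0 ^ 2 + a1 ^ 2 + a2 ^ 2 = 0 →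
          (a0 * x 0 + a1 * x 1 + a2 * x 2) ≠ 0 → Even n := by
        intro a0 a1 a2 ha hz
        have h := key a0 a1 a2 ha
        have hxn : (a0 * x' 0 + a1 * x' 1 + a2 * x' 2)
            = -(a0 * x 0 + a1 * x 1 + a2 * x 2) := by
          rw [hneg 0, hneg 1, hneg 2]; push_cast; ring
        rw [hxn, neg_pow] at h
        have hp : (a0 * x 0 + a1 * x 1 + a2 * x 2) ^ n ≠ 0 := pow_ne_zero _ hz
        have : (-1 : ℂ) ^ n = 1 := by
          have h2 : (-1 : ℂ) ^ n * (a0 * ↑(x 0) + a1 * ↑(x 1) + a2 * ↑(x 2)) ^ n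
              = 1 * (a0 * ↑(x 0) + a1 * ↑(x 1) + a2 * ↑(x 2)) ^ n := by
            rw [one_mul, ← h]
          exact mul_right_cancel₀ hp h2
        exact (neg_one_pow_eq_one_iff_even (by norm_num : (-1 : ℂ) ≠ 1)).mp this
      rcases hxne with h | h | h
      · refine hzkey 1 Complex.I 0 (by simp [Complex.I_sq]) ?_
        simp only [one_mul, zero_mul, add_zero]
        intro hc
        rw [Complex.ext_iff] at hc
        simp at hc
        exact h hc.1
      · refine hzkey 1 Complex.I 0 (by simp [Complex.I_sq]) ?_
        simp only [one_mul, zero_mul, add_zero]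
        intro hc
        rw [Complex.ext_iff] at hc
        simp at hc
        exact h hc.2
      · refine hzkey 0 1 Complex.I (by simp [Complex.I_sq]) ?_
        simp only [one_mul, zero_mul, zero_add]
        intro hc
        rw [Complex.ext_iff] at hc
        simp at hc
        exact h hc.2
    have hodd : Odd (n - 1) := Nat.Even.sub_odd hn heven (by norm_num)
    right
    rw [hodd.neg_one_pow, hNeg]
    funext i
    simp
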